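/- In ℤ[x] with I = (2, x²+x), the τ_I-elasticity of the element a_i = x^i(x+1)^i satisfies ρ_I(a_i) = i/2 for every i ≥ 2; consequently the τ_I-elasticity of ℤ[x] (the supremum of ρ_I(a) over τ_I-atomic a) is infinite. -/

import Mathlib

open Polynomial
open scoped ENNReal

variable {R : Type*} [CommRing R]

/-- `a = λ b₁ ⋯ b_k` with `λ` a unit, `k ≥ 1`, and all `bᵢ` pairwise congruent mod `I`. -/
def IsTauFactorization (I : Ideal R) (a : R) (L : List R) : Prop :=
  L ≠ [] ∧ (∃ u : R, IsUnit u ∧ a = u * L.prod) ∧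
    ∀ b ∈ L, ∀ c ∈ L, Ideal.Quotient.mk I b = Ideal.Quotient.mk I c

/-- A `τ_I`-atom: a nonzero nonunit whose only `τ_I`-factorizations have length one. -/
def IsTauAtom (I : Ideal R) (a : R) : Prop :=
  a ≠ 0 ∧ ¬ IsUnit a ∧ ∀ L : List R, IsTauFactorization I a L → L.length = 1

/-- A `τ_I`-factorization into `τ_I`-atoms. -/
def IsTauAtomicFactorization (I : Ideal R) (a : R) (L : List R) : Prop :=
  IsTauFactorization I a L ∧ ∀ b ∈ L, IsTauAtom I b

/-- An element is `τ_I`-atomic if it has a `τ_I`-factorization into `τ_I`-atoms. -/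
def IsTauAtomic (I : Ideal R) (a : R) : Prop :=
  ∃ L : List R, IsTauAtomicFactorization I a L

/-- The `τ_I`-elasticity of an element: `sup{k/l}` over pairs of atomic `τ_I`-factorizations. -/
noncomputable def tauElasticity (I : Ideal R) (a : R) : ℝ≥0∞ :=
  sSup {r : ℝ≥0∞ | ∃ L₁ L₂ : List R, IsTauAtomicFactorization I a L₁ ∧
    IsTauAtomicFactorization I a L₂ ∧
    r = (L₁.length : ℝ≥0∞) / (L₂.length : ℝ≥0∞)}

/-- The `τ_I`-elasticity of the ring: the supremum over `τ_I`-atomic elements. -/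
noncomputable def tauRingElasticity (I : Ideal R) : ℝ≥0∞ :=
  ⨆ a ∈ {a : R | IsTauAtomic I a}, tauElasticity I a

section Aux

variable {M : Type*} [CommMonoidWithZero M] [IsCancelMulZero M]

lemma aux_dvd_of_dvd_prime_mul {p b m : M} (hp : Prime p) (hpb : ¬ p ∣ b)
    (h : b ∣ p * m) : b ∣ m := by
  obtain ⟨c, hc⟩ := h
  have hpc : p ∣ b * c := ⟨m, by rw [← hc]⟩
  rcases hp.dvd_mul.mp hpc with h1 | h2
  · exact absurd h1 hpb
  · obtain ⟨c', rfl⟩ := h2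
    refine ⟨c', ?_⟩
    have : p * m = p * (b * c') := by rw [hc, mul_left_comm]
    exact mul_left_cancel₀ hp.ne_zero this

lemma aux_dvd_of_dvd_prime_pow_mul {p b m : M} (hp : Prime p) (hpb : ¬ p ∣ b) :
    ∀ n : ℕ, b ∣ p ^ n * m → b ∣ m
  | 0, h => by simpa using h
  | n + 1, h => by
    apply aux_dvd_of_dvd_prime_pow_mul hp hpb n
    apply aux_dvd_of_dvd_prime_mul hp hpb
    rwa [pow_succ', mul_assoc] at h

end Aux

lemma aux_pow_length_dvd {M : Type*} [CommMonoid M] {p : M} :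
    ∀ (L : List M), (∀ b ∈ L, p ∣ b) → p ^ L.length ∣ L.prod
  | [], _ => by simp
  | b :: L, h => by
    simp only [List.length_cons, List.prod_cons, pow_succ']
    exact mul_dvd_mul (h b (by simp))
      (aux_pow_length_dvd L fun c hc => h c (by simp [hc]))

namespace Tau16

noncomputable def phi (r : ℤ) : ℤ[X] →+* ZMod 2 :=
  (Int.castRingHom (ZMod 2)).comp (evalRingHom r)

local notation "𝕀" => Ideal.span ({2, X ^ 2 + X} : Set ℤ[X])

lemma phi_X (r : ℤ) : phi r X = (r : ZMod 2) := by simp [phi]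

lemma phi0_X : phi 0 X = 0 := by simp [phi]
lemma phi0_X1 : phi 0 (X + 1) = 1 := by simp [phi]
lemma phi1_X : phi 1 X = 1 := by simp [phi]
lemma phi1_X1 : phi 1 (X + 1) = 0 := by simp [phi]; decide

lemma I_le_ker0 : 𝕀 ≤ RingHom.ker (phi 0) := by
  rw [Ideal.span_le]
  rintro x (rfl | rfl) <;> simp [RingHom.mem_ker, phi] <;> decide

lemma I_le_ker1 : 𝕀 ≤ RingHom.ker (phi 1) := by
  rw [Ideal.span_le]
  rintro x (rfl | rfl) <;> simp [RingHom.mem_ker, phi] <;> decide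

lemma phi_congr {r : ℤ} (hr : 𝕀 ≤ RingHom.ker (phi r)) {b c : ℤ[X]}
    (h : Ideal.Quotient.mk 𝕀 b = Ideal.Quotient.mk 𝕀 c) : phi r b = phi r c := by
  have hm : b - c ∈ 𝕀 := Ideal.Quotient.eq.mp h
  have := hr hm
  rw [RingHom.mem_ker, map_sub, sub_eq_zero] at this
  exact this

lemma primeX : Prime (X : ℤ[X]) := Polynomial.prime_X

lemma primeX1 : Prime (X + 1 : ℤ[X]) := by
  have h := Polynomial.prime_X_sub_C (-1 : ℤ)
  simpa [sub_neg_eq_add] using h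

lemma notXdvdX1 : ¬ (X : ℤ[X]) ∣ (X + 1) := by
  intro ⟨g, hg⟩
  have : phi 0 (X + 1) = phi 0 (X * g) := by rw [← hg]
  simp [phi0_X1, map_mul, phi0_X] at this

lemma notX1dvdX : ¬ (X + 1 : ℤ[X]) ∣ X := by
  intro ⟨g, hg⟩
  have : phi 1 X = phi 1 ((X + 1) * g) := by rw [← hg]
  simp [phi1_X, map_mul, phi1_X1] at this

lemma main_struct {J K : ℕ} (hJ : 1 ≤ J) (hK : 1 ≤ K) {L : List ℤ[X]}
    (h : IsTauFactorization 𝕀 (X ^ J * (X + 1) ^ K) L) :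
    (∀ b ∈ L, (X * (X + 1) : ℤ[X]) ∣ b) ∧ L.length ≤ J ∧ L.length ≤ K := by
  obtain ⟨hne, ⟨u, hu, hprod⟩, hcong⟩ := h
  have hLp : L.prod ∣ X ^ J * (X + 1) ^ K := ⟨u, by rw [hprod]; ring⟩
  -- X divides some element of L
  have hXA : (X : ℤ[X]) ∣ X ^ J * (X + 1) ^ K :=
    dvd_mul_of_dvd_left (dvd_pow_self X (by omega)) _
  have hXL : (X : ℤ[X]) ∣ L.prod := by
    rw [hprod] at hXA
    rcases primeX.dvd_mul.mp hXA with h1 | h2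
    · exact absurd (isUnit_of_dvd_unit h1 hu) Polynomial.not_isUnit_X
    · exact h2
  obtain ⟨b₀, hb₀L, hXb₀⟩ := (Prime.dvd_prod_iff primeX).mp hXL
  have hX1A : (X + 1 : ℤ[X]) ∣ X ^ J * (X + 1) ^ K :=
    dvd_mul_of_dvd_right (dvd_pow_self _ (by omega)) _
  have hX1L : (X + 1 : ℤ[X]) ∣ L.prod := by
    rw [hprod] at hX1A
    rcases primeX1.dvd_mul.mp hX1A with h1 | h2
    · exact absurd (isUnit_of_dvd_unit h1 hu) primeX1.not_unit
    · exact h2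
  obtain ⟨c₀, hc₀L, hX1c₀⟩ := (Prime.dvd_prod_iff primeX1).mp hX1L
  have hphi0 : ∀ b ∈ L, phi 0 b = 0 := by
    intro b hb
    rw [phi_congr I_le_ker0 (hcong b hb b₀ hb₀L)]
    obtain ⟨e, rfl⟩ := hXb₀
    simp [map_mul, phi0_X]
  have hphi1 : ∀ b ∈ L, phi 1 b = 0 := by
    intro b hb
    rw [phi_congr I_le_ker1 (hcong b hb c₀ hc₀L)]
    obtain ⟨e, rfl⟩ := hX1c₀
    simp [map_mul, phi1_X1]
  have hdvd : ∀ b ∈ L, (X * (X + 1) : ℤ[X]) ∣ b := by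
    intro b hb
    have hbA : b ∣ X ^ J * (X + 1) ^ K := (List.dvd_prod hb).trans hLp
    have hXb : (X : ℤ[X]) ∣ b := by
      by_contra hX
      have h2 : b ∣ (X + 1) ^ K := aux_dvd_of_dvd_prime_pow_mul primeX hX J hbA
      obtain ⟨i, hi, v, hv⟩ := (dvd_prime_pow primeX1 K).mp h2
      have : phi 0 b * phi 0 v = 1 := by
        rw [← map_mul, hv, map_pow, phi0_X1, one_pow]
      rw [hphi0 b hb, zero_mul] at this
      exact zero_ne_one this
    have hX1b : (X + 1 : ℤ[X]) ∣ b := by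
      by_contra hX1
      have hbA' : b ∣ (X + 1) ^ K * X ^ J := by rwa [mul_comm] at hbA
      have h2 : b ∣ X ^ J := aux_dvd_of_dvd_prime_pow_mul primeX1 hX1 K hbA'
      obtain ⟨i, hi, v, hv⟩ := (dvd_prime_pow primeX J).mp h2
      have : phi 1 b * phi 1 v = 1 := by
        rw [← map_mul, hv, map_pow, phi1_X, one_pow]
      rw [hphi1 b hb, zero_mul] at this
      exact zero_ne_one this
    obtain ⟨e, rfl⟩ := hXb
    rcases primeX1.dvd_mul.mp hX1b with h1 | h2
    · exact absurd h1 notX1dvdX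
    · exact mul_dvd_mul_left X h2
  refine ⟨hdvd, ?_, ?_⟩
  · by_contra hlen
    push_neg at hlen
    have hp1 : (X : ℤ[X]) ^ L.length ∣ X ^ J * (X + 1) ^ K := by
      refine dvd_trans ?_ ((aux_pow_length_dvd L hdvd).trans hLp)
      exact pow_dvd_pow_of_dvd (dvd_mul_right X (X + 1)) _
    have hp2 : (X : ℤ[X]) ^ (J + 1) ∣ X ^ J * (X + 1) ^ K :=
      (pow_dvd_pow X (by omega)).trans hp1
    rw [pow_succ] at hp2
    have : (X : ℤ[X]) ∣ (X + 1) ^ K := by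
      have := (mul_dvd_mul_iff_left (pow_ne_zero J Polynomial.X_ne_zero)).mp hp2
      exact this
    exact notXdvdX1 (primeX.dvd_of_dvd_pow this)
  · by_contra hlen
    push_neg at hlen
    have hp1 : (X + 1 : ℤ[X]) ^ L.length ∣ X ^ J * (X + 1) ^ K := by
      refine dvd_trans ?_ ((aux_pow_length_dvd L hdvd).trans hLp)
      exact pow_dvd_pow_of_dvd (dvd_mul_left (X + 1) X) _
    have hp2 : (X + 1 : ℤ[X]) ^ (K + 1) ∣ (X + 1) ^ K * X ^ J := by
      rw [mul_comm]
      exact (pow_dvd_pow _ (by omega)).trans hp1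
    rw [pow_succ] at hp2
    have hX1ne : (X + 1 : ℤ[X]) ≠ 0 := primeX1.ne_zero
    have : (X + 1 : ℤ[X]) ∣ X ^ J :=
      (mul_dvd_mul_iff_left (pow_ne_zero K hX1ne)).mp hp2
    exact notX1dvdX (primeX1.dvd_of_dvd_pow this)

lemma memI : (X ^ 2 + X : ℤ[X]) ∈ 𝕀 := Ideal.subset_span (by simp)

lemma mk_mul_zero (g : ℤ[X]) :
    Ideal.Quotient.mk 𝕀 ((X ^ 2 + X) * g) = 0 :=
  Ideal.Quotient.eq_zero_iff_mem.mpr (Ideal.mul_mem_right _ _ memI)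

lemma isAtom {j k : ℕ} (hj : 1 ≤ j) (hk : 1 ≤ k) (hmin : j = 1 ∨ k = 1) :
    IsTauAtom 𝕀 (X ^ j * (X + 1) ^ k) := by
  refine ⟨mul_ne_zero (pow_ne_zero _ Polynomial.X_ne_zero)
    (pow_ne_zero _ primeX1.ne_zero), ?_, ?_⟩
  · intro hU
    have hXd : (X : ℤ[X]) ∣ X ^ j * (X + 1) ^ k :=
      dvd_mul_of_dvd_left (dvd_pow_self X (by omega)) _
    exact primeX.not_unit (isUnit_of_dvd_unit hXd hU)
  · intro L hL
    have h1 : 1 ≤ L.length := List.length_pos_iff.mpr hL.1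
    have h := main_struct hj hk hL
    rcases hmin with rfl | rfl
    · have := h.2.1; omega
    · have := h.2.2; omega

lemma prod_eq (i : ℕ) : ((X ^ 2 + X : ℤ[X])) ^ i = X ^ i * (X + 1) ^ i := by
  rw [show (X ^ 2 + X : ℤ[X]) = X * (X + 1) by ring, mul_pow]

lemma atomXX1 : IsTauAtom 𝕀 (X ^ 2 + X : ℤ[X]) := by
  have h := isAtom (le_refl 1) (le_refl 1) (Or.inl rfl)
  have heq : (X : ℤ[X]) ^ 1 * (X + 1) ^ 1 = X ^ 2 + X := by ring
  rwa [heq] at h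

lemma factMax {i : ℕ} (hi : 1 ≤ i) :
    IsTauAtomicFactorization 𝕀 (X ^ i * (X + 1) ^ i)
      (List.replicate i (X ^ 2 + X)) := by
  refine ⟨⟨?_, ⟨1, isUnit_one, ?_⟩, ?_⟩, ?_⟩
  · simp only [ne_eq, List.replicate_eq_nil_iff]; omega
  · rw [List.prod_replicate, one_mul, prod_eq]
  · intro b hb c hc
    rw [List.eq_of_mem_replicate hb, List.eq_of_mem_replicate hc]
  · intro b hb
    rw [List.eq_of_mem_replicate hb]
    exact atomXX1

lemma factMin {i : ℕ} (hi : 2 ≤ i) :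
    IsTauAtomicFactorization 𝕀 (X ^ i * (X + 1) ^ i)
      [X * (X + 1) ^ (i - 1), X ^ (i - 1) * (X + 1)] := by
  obtain ⟨m, rfl⟩ : ∃ m, i = m + 2 := ⟨i - 2, by omega⟩
  have hm1 : m + 2 - 1 = m + 1 := by omega
  have he1 : (X * (X + 1) ^ (m + 2 - 1) : ℤ[X]) = (X ^ 2 + X) * (X + 1) ^ m := by
    rw [hm1]; ring
  have he2 : (X ^ (m + 2 - 1) * (X + 1) : ℤ[X]) = (X ^ 2 + X) * X ^ m := by
    rw [hm1]; ring
  refine ⟨⟨by simp, ⟨1, isUnit_one, ?_⟩, ?_⟩, ?_⟩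
  · simp only [List.prod_cons, List.prod_nil, mul_one, one_mul, hm1]
    ring
  · intro b hb c hc
    simp only [List.mem_cons, List.not_mem_nil, or_false] at hb hc
    have key : ∀ d ∈ [X * (X + 1) ^ (m + 2 - 1), X ^ (m + 2 - 1) * (X + 1)],
        Ideal.Quotient.mk 𝕀 d = 0 := by
      intro d hd
      simp only [List.mem_cons, List.not_mem_nil, or_false] at hd
      rcases hd with rfl | rfl
      · rw [he1]; exact mk_mul_zero _
      · rw [he2]; exact mk_mul_zero _
    rw [key b (by simpa using hb), key c (by simpa using hc)]
  · intro b hb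
    simp only [List.mem_cons, List.not_mem_nil, or_false] at hb
    rcases hb with rfl | rfl
    · have h := isAtom (le_refl 1) (by omega : 1 ≤ m + 2 - 1) (Or.inl rfl)
      rwa [pow_one] at h
    · have h := isAtom (by omega : 1 ≤ m + 2 - 1) (le_refl 1) (Or.inr rfl)
      rwa [pow_one] at h

lemma two_le_length {i : ℕ} (hi : 2 ≤ i) {L : List ℤ[X]}
    (h : IsTauAtomicFactorization 𝕀 (X ^ i * (X + 1) ^ i) L) : 2 ≤ L.length := by
  obtain ⟨⟨hne, ⟨u, hu, hprod⟩, hcong⟩, hatoms⟩ := h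
  have h1 : 1 ≤ L.length := List.length_pos_iff.mpr hne
  by_contra hlen
  push_neg at hlen
  have hL1 : L.length = 1 := by omega
  obtain ⟨b, rfl⟩ := List.length_eq_one_iff.mp hL1
  have hb : IsTauAtom 𝕀 b := hatoms b (by simp)
  obtain ⟨v, hv⟩ := hu
  have hp' : X ^ i * (X + 1) ^ i = u * b := by simpa using hprod
  have hbval : b = ((v⁻¹ : ℤ[X]ˣ) : ℤ[X]) * (X ^ i * (X + 1) ^ i) := by
    rw [hp', ← hv, ← mul_assoc]
    simp
  have hpowsplit : ((X ^ 2 + X : ℤ[X])) ^ i = (X ^ 2 + X) * (X ^ 2 + X) ^ (i - 1) := by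
    rw [← pow_succ']
    congr 1
    omega
  have hfac : IsTauFactorization 𝕀 b
      [((v⁻¹ : ℤ[X]ˣ) : ℤ[X]) * (X ^ 2 + X), (X ^ 2 + X) ^ (i - 1)] := by
    refine ⟨by simp, ⟨1, isUnit_one, ?_⟩, ?_⟩
    · simp only [List.prod_cons, List.prod_nil, mul_one, one_mul]
      rw [hbval, ← prod_eq, hpowsplit]
      ring
    · intro c hc d hd
      have key : ∀ e ∈ [((v⁻¹ : ℤ[X]ˣ) : ℤ[X]) * (X ^ 2 + X), (X ^ 2 + X) ^ (i - 1)],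
          Ideal.Quotient.mk 𝕀 e = 0 := by
        intro e he
        simp only [List.mem_cons, List.not_mem_nil, or_false] at he
        rcases he with rfl | rfl
        · rw [mul_comm]; exact mk_mul_zero _
        · exact Ideal.Quotient.eq_zero_iff_mem.mpr
            (Ideal.pow_mem_of_mem _ memI _ (by omega))
      rw [key c hc, key d hd]
  have := hb.2.2 _ hfac
  simp at this

end Tau16

/-- In `ℤ[x]` with `I = (2, x²+x)`, the `τ_I`-elasticity of `aᵢ = x^i(x+1)^i` is `i/2`
for every `i ≥ 2`; consequently the `τ_I`-elasticity of `ℤ[x]` is infinite. -/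
theorem stmt_16 :
    (∀ i : ℕ, 2 ≤ i →
      tauElasticity (Ideal.span ({2, X ^ 2 + X} : Set ℤ[X])) (X ^ i * (X + 1) ^ i) =
        (i : ℝ≥0∞) / 2) ∧
    tauRingElasticity (Ideal.span ({2, X ^ 2 + X} : Set ℤ[X])) = ⊤ := by
  have part1 : ∀ i : ℕ, 2 ≤ i →
      tauElasticity (Ideal.span ({2, X ^ 2 + X} : Set ℤ[X])) (X ^ i * (X + 1) ^ i) =
        (i : ℝ≥0∞) / 2 := by
    intro i hi
    apply le_antisymm
    · apply sSup_le
      rintro r ⟨L₁, L₂, h₁, h₂, rfl⟩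
      have hk : L₁.length ≤ i :=
        (Tau16.main_struct (by omega) (by omega) h₁.1).2.1
      have hl : 2 ≤ L₂.length := Tau16.two_le_length hi h₂
      exact ENNReal.div_le_div (by exact_mod_cast hk) (by exact_mod_cast hl)
    · apply le_sSup
      refine ⟨List.replicate i (X ^ 2 + X),
        [X * (X + 1) ^ (i - 1), X ^ (i - 1) * (X + 1)],
        Tau16.factMax (by omega), Tau16.factMin hi, ?_⟩
      simp
  refine ⟨part1, ?_⟩
  have hub : ∀ i : ℕ, 2 ≤ i →
      (i : ℝ≥0∞) / 2 ≤ tauRingElasticity (Ideal.span ({2, X ^ 2 + X} : Set ℤ[X])) := by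
    intro i hi
    have hmem : (X ^ i * (X + 1) ^ i : ℤ[X]) ∈
        {a : ℤ[X] | IsTauAtomic (Ideal.span ({2, X ^ 2 + X} : Set ℤ[X])) a} :=
      ⟨_, Tau16.factMax (by omega)⟩
    calc (i : ℝ≥0∞) / 2
        = tauElasticity (Ideal.span ({2, X ^ 2 + X} : Set ℤ[X])) (X ^ i * (X + 1) ^ i) :=
          (part1 i hi).symm
      _ ≤ _ := le_iSup₂ (f := fun a _ =>
          tauElasticity (Ideal.span ({2, X ^ 2 + X} : Set ℤ[X])) a) _ hmem
  by_contra hne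
  obtain ⟨n, hn⟩ := ENNReal.exists_nat_gt hne
  have h := hub (2 * (n + 1)) (by omega)
  have hcalc : ((2 * (n + 1) : ℕ) : ℝ≥0∞) / 2 = ((n + 1 : ℕ) : ℝ≥0∞) := by
    push_cast
    rw [mul_comm, mul_div_assoc, ENNReal.div_self (by norm_num) (by norm_num), mul_one]
  rw [hcalc] at h
  have hlt : ((n : ℕ) : ℝ≥0∞) < ((n + 1 : ℕ) : ℝ≥0∞) := by exact_mod_cast Nat.lt_succ_self n
  exact absurd (lt_of_lt_of_le hn (le_trans hlt.le h)) (lt_irrefl _)
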